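/- Sandwich lemma for closure ordinals: let F, H : Set A → Set A be monotone operators and γ an ordinal such that for every ordinal α one has F^α(∅) ⊆ H^α(∅) ⊆ F^{γ+α}(∅). Then the least fixed points of F and H coincide, and the closure ordinal of F is at most γ + β, where β is the closure ordinal of H. -/

import Mathlib

open OrdinalApprox

universe u

/-- The closure ordinal of a monotone operator: the least ordinal `γ` with
`F^{γ+1}(∅) = F^γ(∅)`. -/
noncomputable def closureOrdinal {A : Type u} (F : Set A →o Set A) : Ordinal.{u} :=
  sInf { γ : Ordinal.{u} | lfpApprox F ⊥ (γ + 1) = lfpApprox F ⊥ γ }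

lemma lfpApprox_le_lfp' {A : Type u} (F : Set A →o Set A) (i : Ordinal.{u}) :
    lfpApprox F ⊥ i ≤ F.lfp :=
  lfpApprox_le_of_mem_fixedPoints F (x := ⊥) F.map_lfp bot_le i

/-- **Sandwich lemma for closure ordinals.** If `F, H` are monotone and
`F^α(∅) ⊆ H^α(∅) ⊆ F^{γ+α}(∅)` for every ordinal `α`, then `lfp F = lfp H` and the closure
ordinal of `F` is at most `γ + β`, where `β` is the closure ordinal of `H`. -/
theorem sandwich_lemma {A : Type u} (F H : Set A → Set A) (hF : Monotone F) (hH : Monotone H)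
    (γ : Ordinal.{u})
    (hsand : ∀ α : Ordinal.{u},
      lfpApprox ⟨F, hF⟩ ⊥ α ⊆ lfpApprox ⟨H, hH⟩ ⊥ α ∧
      lfpApprox ⟨H, hH⟩ ⊥ α ⊆ lfpApprox ⟨F, hF⟩ ⊥ (γ + α)) :
    OrderHom.lfp ⟨F, hF⟩ = OrderHom.lfp ⟨H, hH⟩ ∧
    closureOrdinal ⟨F, hF⟩ ≤ γ + closureOrdinal ⟨H, hH⟩ := by
  set F' : Set A →o Set A := ⟨F, hF⟩
  set H' : Set A →o Set A := ⟨H, hH⟩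
  set κ : Ordinal.{u} := Cardinal.ord (Order.succ (Cardinal.mk (Set A)))
  have hlfp : F'.lfp = H'.lfp := by
    apply le_antisymm
    · rw [← lfpApprox_ord_eq_lfp F', ← lfpApprox_ord_eq_lfp H']
      exact (hsand κ).1
    · rw [← lfpApprox_ord_eq_lfp H']
      exact le_trans (hsand κ).2 (lfpApprox_le_lfp' F' _)
  refine ⟨hlfp, ?_⟩
  -- β = closureOrdinal H' belongs to the defining set since that set is nonempty
  have hne : {δ : Ordinal.{u} | lfpApprox H' ⊥ (δ + 1) = lfpApprox H' ⊥ δ}.Nonempty := by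
    refine ⟨κ, ?_⟩
    have h1 : lfpApprox H' ⊥ κ = H'.lfp := lfpApprox_ord_eq_lfp H'
    have h2 : lfpApprox H' ⊥ (κ + 1) ≤ H'.lfp := lfpApprox_le_lfp' H' _
    have h3 : lfpApprox H' ⊥ κ ≤ lfpApprox H' ⊥ (κ + 1) :=
      lfpApprox_monotone H' (x := ⊥) (le_of_lt (Order.lt_succ κ))
    exact le_antisymm (h1 ▸ h2) (h1 ▸ h3)
  set β := closureOrdinal H' with hβ
  have hβmem : lfpApprox H' ⊥ (β + 1) = lfpApprox H' ⊥ β := csInf_mem hne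
  -- lfpApprox H' ⊥ β is a fixed point of H', hence equals lfp H'
  have hfix : H' (lfpApprox H' ⊥ β) = lfpApprox H' ⊥ β := by
    rw [← lfpApprox_add_one H' (x := ⊥) bot_le β]; exact hβmem
  have hβlfp : lfpApprox H' ⊥ β = H'.lfp := by
    apply le_antisymm (lfpApprox_le_lfp' H' β)
    exact H'.lfp_le (le_of_eq hfix)
  -- F stabilizes at γ + β
  have hFeq : lfpApprox F' ⊥ (γ + β) = F'.lfp := by
    apply le_antisymm (lfpApprox_le_lfp' F' _)
    calc F'.lfp = lfpApprox H' ⊥ β := by rw [hβlfp, hlfp]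
    _ ≤ lfpApprox F' ⊥ (γ + β) := (hsand β).2
  have hFsucc : lfpApprox F' ⊥ (γ + β + 1) = lfpApprox F' ⊥ (γ + β) := by
    apply le_antisymm
    · rw [hFeq]; exact lfpApprox_le_lfp' F' _
    · exact lfpApprox_monotone F' (x := ⊥) (le_of_lt (Order.lt_succ _))
  exact csInf_le (OrderBot.bddBelow _) hFsucc
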